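/- arXiv:2103.14437 — 2 statements merged into one kernel-verified Lean document; each statement's English description precedes it below -/
import Mathlib

section
/- Let a and γ be real numbers with a ≠ 0, let k ∈ ℂ, and let ω ∈ ℂ with ω ≠ 0, γ − i·a·ω ≠ 0 and γ − 3i·a·ω ≠ 0. Define n²(z) = 1 + 1/(γ − i·a·z). If a·ω³ + i(γ+1)·ω² − a·k²·ω − i·γ·k² = 0, then n²(ω) ≠ n²(3ω), the denominator −9·ω²·(γ − 3i·a·ω) + 9·k²·(γ − 3i·a·ω) − 9·ω² is nonzero, and 9·ω²·(γ − 3i·a·ω) / (−9·ω²·(γ − 3i·a·ω) + 9·k²·(γ − 3i·a·ω) − 9·ω²) = 1/(n²(ω) − n²(3ω)). -/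
/-- The third-harmonic coefficient `c₁` of the Sellmeier-transformed toy model
equals `1/(n²(ω) − n²(3ω))`, where `n²(z) = 1 + 1/(γ − i·a·z)`. -/
theorem toy_c1_coefficient (a γ : ℝ) (ha : a ≠ 0) (k ω : ℂ) (hω : ω ≠ 0)
    (h1 : (γ : ℂ) - Complex.I * (a : ℂ) * ω ≠ 0)
    (h3 : (γ : ℂ) - 3 * Complex.I * (a : ℂ) * ω ≠ 0)
    (n2 : ℂ → ℂ) (hn2 : ∀ z : ℂ, n2 z = 1 + 1 / ((γ : ℂ) - Complex.I * (a : ℂ) * z))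
    (hdisp : (a : ℂ) * ω ^ 3 + Complex.I * ((γ : ℂ) + 1) * ω ^ 2
        - (a : ℂ) * k ^ 2 * ω - Complex.I * (γ : ℂ) * k ^ 2 = 0) :
    n2 ω ≠ n2 (3 * ω) ∧
    (-9 * ω ^ 2 * ((γ : ℂ) - 3 * Complex.I * (a : ℂ) * ω)
        + 9 * k ^ 2 * ((γ : ℂ) - 3 * Complex.I * (a : ℂ) * ω) - 9 * ω ^ 2) ≠ 0 ∧
    9 * ω ^ 2 * ((γ : ℂ) - 3 * Complex.I * (a : ℂ) * ω)
        / (-9 * ω ^ 2 * ((γ : ℂ) - 3 * Complex.I * (a : ℂ) * ω)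
            + 9 * k ^ 2 * ((γ : ℂ) - 3 * Complex.I * (a : ℂ) * ω) - 9 * ω ^ 2)
      = 1 / (n2 ω - n2 (3 * ω)) := by
  have haC : (a : ℂ) ≠ 0 := Complex.ofReal_ne_zero.mpr ha
  have hI : Complex.I ≠ 0 := Complex.I_ne_zero
  set D : ℂ := -9 * ω ^ 2 * ((γ : ℂ) - 3 * Complex.I * (a : ℂ) * ω)
      + 9 * k ^ 2 * ((γ : ℂ) - 3 * Complex.I * (a : ℂ) * ω) - 9 * ω ^ 2 with hD
  have hDprod : D * (((γ : ℂ) - Complex.I * (a : ℂ) * ω)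
      * ((γ : ℂ) - 3 * Complex.I * (a : ℂ) * ω))
      = -18 * Complex.I * (a : ℂ) * ω ^ 3 * ((γ : ℂ) - 3 * Complex.I * (a : ℂ) * ω) := by
    rw [hD]
    linear_combination (9 * Complex.I * (γ : ℂ) ^ 2 + 54 * (a : ℂ) * (γ : ℂ) * ω
        - 81 * Complex.I * (a : ℂ) ^ 2 * ω ^ 2) * hdisp
      + (54 * ω ^ 2 * (γ : ℂ) * (a : ℂ) ^ 2 * k ^ 2 - 9 * ω ^ 2 * (γ : ℂ) ^ 2
        - 9 * ω ^ 2 * (γ : ℂ) ^ 3 - 81 * ω ^ 3 * Complex.I * (a : ℂ) ^ 3 * k ^ 2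
        - 54 * ω ^ 4 * (γ : ℂ) * (a : ℂ) ^ 2 + 81 * ω ^ 5 * Complex.I * (a : ℂ) ^ 3
        + 9 * (γ : ℂ) ^ 3 * k ^ 2) * Complex.I_sq
  have hRHS : (-18 : ℂ) * Complex.I * (a : ℂ) * ω ^ 3
      * ((γ : ℂ) - 3 * Complex.I * (a : ℂ) * ω) ≠ 0 := by
    apply mul_ne_zero _ h3
    apply mul_ne_zero (mul_ne_zero (mul_ne_zero (by norm_num) hI) haC) (pow_ne_zero _ hω)
  have hDne : D ≠ 0 := by
    intro h
    rw [h, zero_mul] at hDprod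
    exact hRHS hDprod.symm
  have hdiff : n2 ω - n2 (3 * ω)
      = -2 * Complex.I * (a : ℂ) * ω / (((γ : ℂ) - Complex.I * (a : ℂ) * ω)
        * ((γ : ℂ) - 3 * Complex.I * (a : ℂ) * ω)) := by
    rw [hn2, hn2]
    have h3' : (γ : ℂ) - Complex.I * (a : ℂ) * (3 * ω) ≠ 0 := by
      convert h3 using 2; ring
    have h3'' : (γ : ℂ) - Complex.I * (a : ℂ) * ω * 3 ≠ 0 := by
      convert h3 using 2; ring
    field_simp
    ring
  have hne : n2 ω ≠ n2 (3 * ω) := by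
    intro h
    rw [h, sub_self] at hdiff
    have := hdiff.symm
    rw [div_eq_zero_iff] at this
    rcases this with h' | h'
    · exact mul_ne_zero (mul_ne_zero (mul_ne_zero (by norm_num) hI) haC) hω h'
    · exact mul_ne_zero h1 h3 h'
  refine ⟨hne, hDne, ?_⟩
  rw [hdiff]
  rw [one_div_div]
  rw [div_eq_div_iff hDne (by exact mul_ne_zero (mul_ne_zero (mul_ne_zero (by norm_num) hI) haC) hω)]
  linear_combination -hDprod
end

section
/- Let a, b, c be real numbers, let k ∈ ℂ, and let ω ∈ ℂ with ω ≠ 0, a·ω² + i·b·ω + c ≠ 0 and 9a·ω² + 3i·b·ω + c ≠ 0. Define n²(z) = 1 + 1/(a·z² + i·b·z + c). If a·ω⁴ + i·b·ω³ + (c+1)·ω² = k²·(a·ω² + i·b·ω + c) and n²(ω) ≠ n²(3ω), then the denominator ω²·(81a·k² − 9c − 9) − 81a·ω⁴ + 27i·b·k²·ω − 27i·b·ω³ + 9c·k² is nonzero, and (81a·ω⁴ + 27i·b·ω³ + 9c·ω²) / (ω²·(81a·k² − 9c − 9) − 81a·ω⁴ + 27i·b·k²·ω − 27i·b·ω³ +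 9c·k²) = 1/(n²(ω) − n²(3ω)). -/
/-- The third-harmonic coefficient `c₁` of the Sellmeier-transformed Lorentz equation
equals `1/(n²(ω) − n²(3ω))`, where `n²(z) = 1 + 1/(a·z² + i·b·z + c)`. -/
theorem lorentz_c1_coefficient (a b c : ℝ) (k ω : ℂ) (hω : ω ≠ 0)
    (h1 : (a : ℂ) * ω ^ 2 + Complex.I * (b : ℂ) * ω + (c : ℂ) ≠ 0)
    (h3 : 9 * (a : ℂ) * ω ^ 2 + 3 * Complex.I * (b : ℂ) * ω + (c : ℂ) ≠ 0)
    (n2 : ℂ → ℂ)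
    (hn2 : ∀ z : ℂ, n2 z = 1 + 1 / ((a : ℂ) * z ^ 2 + Complex.I * (b : ℂ) * z + (c : ℂ)))
    (hdisp : (a : ℂ) * ω ^ 4 + Complex.I * (b : ℂ) * ω ^ 3 + ((c : ℂ) + 1) * ω ^ 2
        = k ^ 2 * ((a : ℂ) * ω ^ 2 + Complex.I * (b : ℂ) * ω + (c : ℂ)))
    (hne : n2 ω ≠ n2 (3 * ω)) :
    (ω ^ 2 * (81 * (a : ℂ) * k ^ 2 - 9 * (c : ℂ) - 9) - 81 * (a : ℂ) * ω ^ 4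
        + 27 * Complex.I * (b : ℂ) * k ^ 2 * ω - 27 * Complex.I * (b : ℂ) * ω ^ 3
        + 9 * (c : ℂ) * k ^ 2) ≠ 0 ∧
    (81 * (a : ℂ) * ω ^ 4 + 27 * Complex.I * (b : ℂ) * ω ^ 3 + 9 * (c : ℂ) * ω ^ 2)
        / (ω ^ 2 * (81 * (a : ℂ) * k ^ 2 - 9 * (c : ℂ) - 9) - 81 * (a : ℂ) * ω ^ 4
            + 27 * Complex.I * (b : ℂ) * k ^ 2 * ω - 27 * Complex.I * (b : ℂ) * ω ^ 3
            + 9 * (c : ℂ) * k ^ 2)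
      = 1 / (n2 ω - n2 (3 * ω)) := by
  have e3 : (a : ℂ) * (3 * ω) ^ 2 + Complex.I * (b : ℂ) * (3 * ω) + (c : ℂ)
      = 9 * (a : ℂ) * ω ^ 2 + 3 * Complex.I * (b : ℂ) * ω + (c : ℂ) := by ring
  -- D3 ≠ D1
  have hneD : (9 * (a : ℂ) * ω ^ 2 + 3 * Complex.I * (b : ℂ) * ω + (c : ℂ))
      - ((a : ℂ) * ω ^ 2 + Complex.I * (b : ℂ) * ω + (c : ℂ)) ≠ 0 := by
    intro h
    apply hne
    rw [hn2, hn2, e3, sub_eq_zero.mp h]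
  have hkey : (ω ^ 2 * (81 * (a : ℂ) * k ^ 2 - 9 * (c : ℂ) - 9) - 81 * (a : ℂ) * ω ^ 4
        + 27 * Complex.I * (b : ℂ) * k ^ 2 * ω - 27 * Complex.I * (b : ℂ) * ω ^ 3
        + 9 * (c : ℂ) * k ^ 2) * ((a : ℂ) * ω ^ 2 + Complex.I * (b : ℂ) * ω + (c : ℂ))
      = 9 * ω ^ 2 * ((9 * (a : ℂ) * ω ^ 2 + 3 * Complex.I * (b : ℂ) * ω + (c : ℂ))
          - ((a : ℂ) * ω ^ 2 + Complex.I * (b : ℂ) * ω + (c : ℂ))) := by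
    linear_combination (-9 * (9 * (a : ℂ) * ω ^ 2 + 3 * Complex.I * (b : ℂ) * ω + (c : ℂ))) * hdisp
  have hden : (ω ^ 2 * (81 * (a : ℂ) * k ^ 2 - 9 * (c : ℂ) - 9) - 81 * (a : ℂ) * ω ^ 4
        + 27 * Complex.I * (b : ℂ) * k ^ 2 * ω - 27 * Complex.I * (b : ℂ) * ω ^ 3
        + 9 * (c : ℂ) * k ^ 2) ≠ 0 := by
    intro h
    rw [h, zero_mul] at hkey
    exact mul_ne_zero (mul_ne_zero (by norm_num : (9:ℂ) ≠ 0) (pow_ne_zero 2 hω)) hneD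
      hkey.symm
  refine ⟨hden, ?_⟩
  rw [hn2, hn2, e3]
  have hsub : (1 + 1 / ((a : ℂ) * ω ^ 2 + Complex.I * (b : ℂ) * ω + (c : ℂ)))
      - (1 + 1 / (9 * (a : ℂ) * ω ^ 2 + 3 * Complex.I * (b : ℂ) * ω + (c : ℂ)))
      = ((9 * (a : ℂ) * ω ^ 2 + 3 * Complex.I * (b : ℂ) * ω + (c : ℂ))
          - ((a : ℂ) * ω ^ 2 + Complex.I * (b : ℂ) * ω + (c : ℂ)))
        / (((a : ℂ) * ω ^ 2 + Complex.I * (b : ℂ) * ω + (c : ℂ))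
          * (9 * (a : ℂ) * ω ^ 2 + 3 * Complex.I * (b : ℂ) * ω + (c : ℂ))) := by
    rw [add_sub_add_left_eq_sub, div_sub_div _ _ h1 h3]
    ring
  rw [hsub, one_div_div, div_eq_div_iff hden hneD]
  linear_combination (-(9 * (a : ℂ) * ω ^ 2 + 3 * Complex.I * (b : ℂ) * ω + (c : ℂ))) * hkey
end
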